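/- arXiv:2208.08345 — 3 statements merged into one kernel-verified Lean document; each statement's English description precedes it below -/
import Mathlib

section
/- Applying the Mechanism Identification algorithm (game graph to mechanised causal graph) followed by the Agency Identification algorithm (mechanised causal graph to game graph) to any game graph satisfying the structural assumption on decision-utility components returns the original game graph: a₂(a₃(G)) = G. -/
/-- Agency Identification (a₂) applied after Mechanism Identification (a₃) returns
the original game graph: a₂(a₃(G)) = G.  Here a₃ produces the terminal edges
`(~Y, ~D)` for `D` a decision of agent `A` and `Y` a utility of `A` with a directed
path `D ⇝ Y` avoiding other utilities of `A`; a₂ labels a node a decision iff its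
mechanism has an incoming terminal edge, a utility iff it has an outgoing terminal
edge, keeps the object-level edges, and colours decisions/utilities by the weakly
connected components of the terminal-edge graph.  Under the structural assumption
on the decision-utility components, the recovered decisions, utilities, object
edges and agent colouring coincide with those of `G`. -/
theorem agency_after_mechanism_identification_is_identity
    {V : Type*} {Ag : Type*}
    (E : V → V → Prop)
    (Dec Util : Ag → Set V)
    (hDisjDU : ∀ A B v, v ∈ Dec A → v ∈ Util B → False)
    (hDisjDD : ∀ A B v, v ∈ Dec A → v ∈ Dec B → A = B)
    (hDisjUU : ∀ A B v, v ∈ Util A → v ∈ Util B → A = B)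
    -- agent-subgraph edges of G
    (AgentEdge : Ag → V → V → Prop)
    (hAgentEdge : ∀ A D U, AgentEdge A D U ↔
      D ∈ Dec A ∧ U ∈ Util A ∧
        Relation.TransGen (fun a b => E a b ∧ (b = U ∨ b ∉ Util A)) D U)
    -- structural assumption: every weakly connected component of the
    -- decision-utility subgraph is an agent subgraph with ≥ 1 decision and ≥ 1 utility
    (hcomp : ∀ x ∈ (⋃ A, Dec A) ∪ (⋃ A, Util A), ∃ A,
      {y | (y ∈ (⋃ A', Dec A') ∪ (⋃ A', Util A')) ∧
          Relation.ReflTransGen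
            (fun a b => (∃ A', AgentEdge A' a b) ∨ (∃ A', AgentEdge A' b a)) x y}
        = Dec A ∪ Util A
      ∧ (Dec A).Nonempty ∧ (Util A).Nonempty)
    -- a₃: the terminal edges of the mechanised causal graph
    (Eterm : V → V → Prop)
    (hEterm : ∀ Y D, Eterm Y D ↔ ∃ A, AgentEdge A D Y)
    -- a₂ applied to the result of a₃
    (DecOut UtilOut : Set V) (EOut : V → V → Prop)
    (hDecOut : DecOut = {D | ∃ Y, Eterm Y D})
    (hUtilOut : UtilOut = {Y | ∃ D, Eterm Y D})
    (hEOut : ∀ x y, EOut x y ↔ E x y)  -- a₂ outputs the object-level edges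
    (SameAgentOut : V → V → Prop)
    (hSame : ∀ x y, SameAgentOut x y ↔
      Relation.ReflTransGen (fun a b => Eterm a b ∨ Eterm b a) x y) :
    -- a₂(a₃(G)) = G :
    (∀ v, v ∈ DecOut ↔ ∃ A, v ∈ Dec A) ∧
    (∀ v, v ∈ UtilOut ↔ ∃ A, v ∈ Util A) ∧
    (∀ x y, EOut x y ↔ E x y) ∧
    (∀ x y, x ∈ DecOut ∪ UtilOut → y ∈ DecOut ∪ UtilOut →
      (SameAgentOut x y ↔ ∃ A, x ∈ Dec A ∪ Util A ∧ y ∈ Dec A ∪ Util A)) := by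
  have hAE : ∀ A D U, AgentEdge A D U → D ∈ Dec A ∧ U ∈ Util A := by
    intro A D U h
    have := (hAgentEdge A D U).1 h
    exact ⟨this.1, this.2.1⟩
  -- the symmetric step relations coincide
  have hrel : ∀ a b, (Eterm a b ∨ Eterm b a) ↔
      ((∃ A', AgentEdge A' a b) ∨ (∃ A', AgentEdge A' b a)) := by
    intro a b
    rw [hEterm, hEterm]
    tauto
  have h1 : ∀ v, v ∈ DecOut ↔ ∃ A, v ∈ Dec A := by
    intro v
    constructor
    · intro hv
      rw [hDecOut] at hv
      obtain ⟨Y, hY⟩ := hv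
      obtain ⟨A, hA⟩ := (hEterm Y v).1 hY
      exact ⟨A, (hAE A v Y hA).1⟩
    · rintro ⟨A, hv⟩
      have hx : v ∈ (⋃ A, Dec A) ∪ (⋃ A, Util A) := Or.inl (Set.mem_iUnion.mpr ⟨A, hv⟩)
      obtain ⟨A', hset, hD, ⟨U, hU⟩⟩ := hcomp v hx
      have hUcomp : (U ∈ (⋃ A', Dec A') ∪ (⋃ A', Util A')) ∧
          Relation.ReflTransGen
            (fun a b => (∃ A', AgentEdge A' a b) ∨ (∃ A', AgentEdge A' b a)) v U := by
        have : U ∈ Dec A' ∪ Util A' := Or.inr hU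
        rw [← hset] at this
        exact this
      have hne : v ≠ U := fun h => hDisjDU A A' v hv (h ▸ hU)
      rcases hUcomp.2.cases_head with h | ⟨b, hstep, _⟩
      · exact absurd h hne
      · rcases hstep with ⟨A'', hedge⟩ | ⟨A'', hedge⟩
        · rw [hDecOut]
          exact ⟨b, (hEterm b v).2 ⟨A'', hedge⟩⟩
        · exact (hDisjDU A A'' v hv (hAE A'' b v hedge).2).elim
  have h2 : ∀ v, v ∈ UtilOut ↔ ∃ A, v ∈ Util A := by
    intro v
    constructor
    · intro hv
      rw [hUtilOut] at hv
      obtain ⟨D, hD⟩ := hv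
      obtain ⟨A, hA⟩ := (hEterm v D).1 hD
      exact ⟨A, (hAE A D v hA).2⟩
    · rintro ⟨A, hv⟩
      have hx : v ∈ (⋃ A, Dec A) ∪ (⋃ A, Util A) := Or.inr (Set.mem_iUnion.mpr ⟨A, hv⟩)
      obtain ⟨A', hset, ⟨D, hDmem⟩, hU⟩ := hcomp v hx
      have hDcomp : (D ∈ (⋃ A', Dec A') ∪ (⋃ A', Util A')) ∧
          Relation.ReflTransGen
            (fun a b => (∃ A', AgentEdge A' a b) ∨ (∃ A', AgentEdge A' b a)) v D := by
        have : D ∈ Dec A' ∪ Util A' := Or.inl hDmem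
        rw [← hset] at this
        exact this
      have hne : v ≠ D := fun h => hDisjDU A' A v (by rw [h]; exact hDmem) hv
      rcases hDcomp.2.cases_head with h | ⟨b, hstep, _⟩
      · exact absurd h hne
      · rcases hstep with ⟨A'', hedge⟩ | ⟨A'', hedge⟩
        · exact (hDisjDU A'' A v (hAE A'' v b hedge).1 hv).elim
        · rw [hUtilOut]
          exact ⟨b, (hEterm v b).2 ⟨A'', hedge⟩⟩
  refine ⟨h1, h2, hEOut, ?_⟩
  intro x y hx hy
  -- x and y are decision-or-utility nodes of G
  have hx' : x ∈ (⋃ A, Dec A) ∪ (⋃ A, Util A) := by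
    rcases hx with h | h
    · obtain ⟨A, hA⟩ := (h1 x).1 h
      exact Or.inl (Set.mem_iUnion.mpr ⟨A, hA⟩)
    · obtain ⟨A, hA⟩ := (h2 x).1 h
      exact Or.inr (Set.mem_iUnion.mpr ⟨A, hA⟩)
  have hy' : y ∈ (⋃ A, Dec A) ∪ (⋃ A, Util A) := by
    rcases hy with h | h
    · obtain ⟨A, hA⟩ := (h1 y).1 h
      exact Or.inl (Set.mem_iUnion.mpr ⟨A, hA⟩)
    · obtain ⟨A, hA⟩ := (h2 y).1 h
      exact Or.inr (Set.mem_iUnion.mpr ⟨A, hA⟩)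
  obtain ⟨A, hset, hDne, hUne⟩ := hcomp x hx'
  have hxA : x ∈ Dec A ∪ Util A := by
    rw [← hset]
    exact ⟨hx', Relation.ReflTransGen.refl⟩
  -- translate SameAgentOut into the hcomp relation
  have hSame' : SameAgentOut x y ↔
      Relation.ReflTransGen
        (fun a b => (∃ A', AgentEdge A' a b) ∨ (∃ A', AgentEdge A' b a)) x y := by
    rw [hSame]
    exact ⟨fun h => Relation.ReflTransGen.mono (fun a b hab => (hrel a b).mp hab) _ _ h,
      fun h => Relation.ReflTransGen.mono (fun a b hab => (hrel a b).mpr hab) _ _ h⟩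
  constructor
  · intro h
    have hyA : y ∈ Dec A ∪ Util A := by
      rw [← hset]
      exact ⟨hy', hSame'.1 h⟩
    exact ⟨A, hxA, hyA⟩
  · rintro ⟨B, hxB, hyB⟩
    have hAB : A = B := by
      rcases hxA with h | h <;> rcases hxB with h' | h'
      · exact hDisjDD A B x h h'
      · exact (hDisjDU A B x h h').elim
      · exact (hDisjDU B A x h' h).elim
      · exact hDisjUU A B x h h'
    subst hAB
    have : y ∈ {y | (y ∈ (⋃ A', Dec A') ∪ (⋃ A', Util A')) ∧
        Relation.ReflTransGen
          (fun a b => (∃ A', AgentEdge A' a b) ∨ (∃ A', AgentEdge A' b a)) x y} := by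
      rw [hset]
      exact hyB
    exact hSame'.2 this.2
end

section
/- Let Γ be a mechanised causal graph such that Γ = a₁(M) for some mechanised causal game M satisfying the five assumptions, and such that every mechanism node with an incoming mechanism edge also has an incoming terminal edge. Then a₃(a₂(Γ)) = Γ, i.e., Mechanism Identification is a left inverse of Agency Identification on this class of graphs. -/
/-! d-separation machinery. -/

inductive GWalk {V : Type*} (E : V → V → Prop) : V → V → List V → Prop
  | single (v : V) : GWalk E v v [v]
  | cons {a b c : V} {l : List V} :
      (E a b ∨ E b a) → GWalk E b c l → GWalk E a c (a :: l)

def ActiveTriple {V : Type*} (E : V → V → Prop) (Z : Set V) (a b c : V) : Prop :=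
  (E a b ∧ E c b ∧ ∃ d ∈ Z, Relation.ReflTransGen E b d) ∨
  (¬(E a b ∧ E c b) ∧ b ∉ Z)

def ActiveTriples {V : Type*} (E : V → V → Prop) (Z : Set V) : List V → Prop
  | a :: b :: c :: rest => ActiveTriple E Z a b c ∧ ActiveTriples E Z (b :: c :: rest)
  | _ => True

def DConn {V : Type*} (E : V → V → Prop) (Z : Set V) (x y : V) : Prop :=
  ∃ l, GWalk E x y l ∧ ActiveTriples E Z l

def HatE {V : Type*} (E : V → V → Prop) (Y : V) : Option V → Option V → Prop :=
  fun a b =>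
    match a, b with
    | some a, some b => E a b
    | none, some b => b = Y
    | _, _ => False

def SReach {V : Type*} (E : V → V → Prop) (PaD : Set V) (D : V) (UD : Set V)
    (Y : V) : Prop :=
  ∃ u ∈ UD, DConn (HatE E Y) (some '' (insert D PaD)) none (some u)

/-- Mechanism Identification (a₃) is a left inverse of Agency Identification (a₂):
let `Γ` be a mechanised causal graph that (i) is `a₁(M)` for a mechanised causal
game `M` satisfying the five assumptions — so by the key lemma its mechanism edges
into decision mechanisms are characterised by s-reachability and its terminal
edges by the directed-path condition — and (ii) is such that every mechanism node
with an incoming mechanism edge also has an incoming terminal edge.  Then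
`a₃(a₂(Γ)) = Γ`. -/
theorem mechanism_identification_left_inverse_of_agency_identification
    {V : Type*} {Ag : Type*}
    (E : V → V → Prop)                                -- object-level edges of Γ
    (hacyc : ∀ x, ¬ Relation.TransGen E x x)
    (Dec Util : Ag → Set V)                           -- the agents of M
    (hDisjDU : ∀ A B v, v ∈ Dec A → v ∈ Util B → False)
    (hDisjDD : ∀ A B v, v ∈ Dec A → v ∈ Dec B → A = B)
    (hDisjUU : ∀ A B v, v ∈ Util A → v ∈ Util B → A = B)
    (AgentEdge : Ag → V → V → Prop)
    (hAgentEdge : ∀ A D U, AgentEdge A D U ↔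
      D ∈ Dec A ∧ U ∈ Util A ∧
        Relation.TransGen (fun a b => E a b ∧ (b = U ∨ b ∉ Util A)) D U)
    -- assumption 1 of M: components of the decision-utility subgraph
    (hcomp : ∀ x, (∃ A, x ∈ Dec A ∨ x ∈ Util A) → ∃ A,
      {y | (∃ A', y ∈ Dec A' ∨ y ∈ Util A') ∧
          Relation.ReflTransGen
            (fun a b => (∃ A', AgentEdge A' a b) ∨ (∃ A', AgentEdge A' b a)) x y}
        = {y | y ∈ Dec A ∨ y ∈ Util A}
      ∧ (∃ d, d ∈ Dec A) ∧ (∃ u, u ∈ Util A))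
    -- the edges of Γ = a₁(M), characterised by the key lemma
    (Emech Eterm : V → V → Prop)
    (hEterm : ∀ Y D, Eterm Y D ↔ ∃ A, AgentEdge A D Y)
    (hEmech : ∀ A D, D ∈ Dec A → ∀ Y, Y ≠ D →
      (Emech Y D ↔
        SReach E {w | E w D} D {u | u ∈ Util A ∧ Relation.TransGen E D u} Y))
    (hnoself : ∀ v, ¬ Emech v v)
    -- only decision mechanisms have incoming mechanism edges, and (second bullet)
    -- every node with an incoming mechanism edge has an incoming terminal edge
    (hbullet : ∀ W Vv, Emech W Vv → ∃ W', Eterm W' Vv) :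
    -- a₃(a₂(Γ)) = Γ : recomputing the terminal and mechanism edges from the game
    -- graph a₂(Γ) (decisions = mechanisms with incoming terminal edges, utilities
    -- = mechanisms with outgoing terminal edges, agents = terminal components)
    -- returns the edges of Γ
    (∀ Y D, ((∃ Y', Eterm Y' D) ∧ (∃ D', Eterm Y D') ∧
        Relation.TransGen
          (fun a b => E a b ∧ (b = Y ∨
            ¬((∃ D', Eterm b D') ∧
              Relation.ReflTransGen (fun x y => Eterm x y ∨ Eterm y x) b D))) D Y ∧
        Relation.ReflTransGen (fun x y => Eterm x y ∨ Eterm y x) Y D)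
      ↔ Eterm Y D) ∧
    (∀ Y D, ((∃ Y', Eterm Y' D) ∧ Y ≠ D ∧
        SReach E {w | E w D} D
          {u | (∃ D', Eterm u D') ∧
            Relation.ReflTransGen (fun x y => Eterm x y ∨ Eterm y x) u D ∧
            Relation.TransGen E D u} Y)
      ↔ Emech Y D) := by
  
  classical
  -- symmetrised terminal relation and symmetrised agent-edge relation
  have symToA : ∀ x y : V, (Eterm x y ∨ Eterm y x) →
      ((∃ A', AgentEdge A' x y) ∨ (∃ A', AgentEdge A' y x)) := by
    rintro x y (h | h)
    · exact Or.inr ((hEterm x y).1 h)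
    · exact Or.inl ((hEterm y x).1 h)
  have symFromA : ∀ x y : V, ((∃ A', AgentEdge A' x y) ∨ (∃ A', AgentEdge A' y x)) →
      (Eterm x y ∨ Eterm y x) := by
    rintro x y (h | h)
    · exact Or.inr ((hEterm y x).2 h)
    · exact Or.inl ((hEterm x y).2 h)
  have symmSym : Symmetric (Relation.ReflTransGen (fun x y => Eterm x y ∨ Eterm y x)) :=
    fun _ _ h => (@Relation.ReflTransGen.symmetric _ (fun x y => Eterm x y ∨ Eterm y x) ⟨fun _ _ h => h.symm⟩).symm _ _ h
  have chainAtoSym : ∀ {x y : V},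
      Relation.ReflTransGen (fun a b => (∃ A', AgentEdge A' a b) ∨ (∃ A', AgentEdge A' b a)) x y →
      Relation.ReflTransGen (fun x y => Eterm x y ∨ Eterm y x) y x := by
    intro x y h
    exact symmSym (Relation.ReflTransGen.mono (fun a b hab => symFromA a b hab) _ _ h)
  have chainSymtoA : ∀ {x y : V},
      Relation.ReflTransGen (fun x y => Eterm x y ∨ Eterm y x) x y →
      Relation.ReflTransGen (fun a b => (∃ A', AgentEdge A' a b) ∨ (∃ A', AgentEdge A' b a)) y x := by
    intro x y h
    exact Relation.ReflTransGen.mono (fun a b hab => symToA a b hab) _ _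
      ((@Relation.ReflTransGen.symmetric _ (fun x y => Eterm x y ∨ Eterm y x) ⟨fun _ _ hh => hh.symm⟩).symm _ _ h)
  -- the component of a decision D of agent A is exactly Dec A ∪ Util A
  have comp : ∀ A (D : V), D ∈ Dec A → ∀ y,
      ((∃ A', y ∈ Dec A' ∨ y ∈ Util A') ∧
        Relation.ReflTransGen
          (fun a b => (∃ A', AgentEdge A' a b) ∨ (∃ A', AgentEdge A' b a)) D y)
      ↔ (y ∈ Dec A ∨ y ∈ Util A) := by
    intro A D hDA y
    obtain ⟨A', hset, -, -⟩ := hcomp D ⟨A, Or.inl hDA⟩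
    have hD' : D ∈ Dec A' ∨ D ∈ Util A' :=
      (Set.ext_iff.1 hset D).1 ⟨⟨A, Or.inl hDA⟩, Relation.ReflTransGen.refl⟩
    have hAA : A' = A := by
      rcases hD' with h | h
      · exact hDisjDD A' A D h hDA
      · exact absurd h (fun hh => hDisjDU A A' D hDA hh)
    subst hAA
    exact Set.ext_iff.1 hset y
  -- characterisation: b is a utility of (the agent of) D iff b has an outgoing
  -- terminal edge and is terminal-connected to D
  have utilChar : ∀ A (D : V), D ∈ Dec A → ∀ b : V,
      b ∈ Util A ↔ ((∃ D', Eterm b D') ∧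
        Relation.ReflTransGen (fun x y => Eterm x y ∨ Eterm y x) b D) := by
    intro A D hDA b
    constructor
    · intro hb
      have hchain := (comp A D hDA b).2 (Or.inr hb)
      refine ⟨?_, chainAtoSym hchain.2⟩
      rcases hchain.2.cases_tail with heq | ⟨c, -, hc⟩
      · exact absurd hb (fun hh => hDisjDU A A b (heq ▸ hDA) hh)
      · rcases hc with ⟨A'', hA''⟩ | ⟨A'', hA''⟩
        · exact ⟨c, (hEterm b c).2 ⟨A'', hA''⟩⟩
        · exact absurd ((hAgentEdge A'' b c).1 hA'').1 (fun hh => hDisjDU A'' A b hh hb)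
    · rintro ⟨⟨D', hbD'⟩, hconn⟩
      obtain ⟨A'', hA''⟩ := (hEterm b D').1 hbD'
      have hbU : b ∈ Util A'' := ((hAgentEdge A'' D' b).1 hA'').2.1
      have := (comp A D hDA b).1 ⟨⟨A'', Or.inr hbU⟩, chainSymtoA hconn⟩
      rcases this with h | h
      · exact absurd h (fun hh => hDisjDU A A'' b hh hbU)
      · exact h
  constructor
  · -- terminal edges
    intro Y D
    constructor
    · rintro ⟨⟨Y', hY'⟩, ⟨D', hYD'⟩, htrans, hconn⟩
      obtain ⟨A, hAE⟩ := (hEterm Y' D).1 hY'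
      have hDA : D ∈ Dec A := ((hAgentEdge A D Y').1 hAE).1
      have hYU : Y ∈ Util A := (utilChar A D hDA Y).2 ⟨⟨D', hYD'⟩, hconn⟩
      refine (hEterm Y D).2 ⟨A, (hAgentEdge A D Y).2 ⟨hDA, hYU, ?_⟩⟩
      refine Relation.TransGen.mono ?_ _ _ htrans
      rintro a b ⟨hab, hb | hb⟩
      · exact ⟨hab, Or.inl hb⟩
      · exact ⟨hab, Or.inr (fun hh => hb ((utilChar A D hDA b).1 hh))⟩
    · intro hYD
      obtain ⟨A, hAE⟩ := (hEterm Y D).1 hYD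
      obtain ⟨hDA, hYU, hpath⟩ := (hAgentEdge A D Y).1 hAE
      refine ⟨⟨Y, hYD⟩, ⟨D, hYD⟩, ?_, Relation.ReflTransGen.single (Or.inl hYD)⟩
      refine Relation.TransGen.mono ?_ _ _ hpath
      rintro a b ⟨hab, hb | hb⟩
      · exact ⟨hab, Or.inl hb⟩
      · exact ⟨hab, Or.inr (fun hh => hb ((utilChar A D hDA b).2 ⟨hh.1, hh.2⟩))⟩
  · -- mechanism edges
    intro Y D
    have hsets : ∀ A, D ∈ Dec A →
        ({u | (∃ D', Eterm u D') ∧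
            Relation.ReflTransGen (fun x y => Eterm x y ∨ Eterm y x) u D ∧
            Relation.TransGen E D u} : Set V)
          = {u | u ∈ Util A ∧ Relation.TransGen E D u} := by
      intro A hDA
      ext u
      constructor
      · rintro ⟨h1, h2, h3⟩
        exact ⟨(utilChar A D hDA u).2 ⟨h1, h2⟩, h3⟩
      · rintro ⟨h1, h2⟩
        obtain ⟨ha, hb⟩ := (utilChar A D hDA u).1 h1
        exact ⟨ha, hb, h2⟩
    constructor
    · rintro ⟨⟨Y', hY'⟩, hne, hS⟩
      obtain ⟨A, hAE⟩ := (hEterm Y' D).1 hY'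
      have hDA : D ∈ Dec A := ((hAgentEdge A D Y').1 hAE).1
      exact (hEmech A D hDA Y hne).2 (hsets A hDA ▸ hS)
    · intro hM
      obtain ⟨W', hW'⟩ := hbullet Y D hM
      obtain ⟨A, hAE⟩ := (hEterm W' D).1 hW'
      have hDA : D ∈ Dec A := ((hAgentEdge A D W').1 hAE).1
      have hne : Y ≠ D := fun h => hnoself D (h ▸ hM)
      exact ⟨⟨W', hW'⟩, hne, (hsets A hDA).symm ▸ (hEmech A D hDA Y hne).1 hM⟩
end

section
/- In the non-descendant utility two-agent game graph (A→U^B, B→U^B, B→U^A), the utility U^A of the agent controlling A is not a descendant of A; hence the agent subgraph for that agent has no edge from A to U^A and the decision-utility subgraph violates the assumption that each weakly connected component is an agent subgraph containing at least one decision and one utility; consequently Agency Identification applied to the discovered mechanised causal graph (with terminal edge only from the mechanism of U^B to the mechanism of B, and a mechanism edge from the mechanism of A to the mechanism of B) labels A and U^A as chance nodes. -/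
/-- The nodes of the non-descendant-utility two-agent game graph. -/
inductive NDU : Type
  | A | B | UA | UB
  deriving DecidableEq

/-- The object-level edges: A→U^B, B→U^B, B→U^A. -/
def NDUEdge : NDU → NDU → Prop :=
  fun a b =>
    match a, b with
    | NDU.A, NDU.UB => True
    | NDU.B, NDU.UB => True
    | NDU.B, NDU.UA => True
    | _, _ => False

/-- Agent 1 (`true`) has decision A and utility U^A; agent 2 (`false`) has
decision B and utility U^B. -/
def NDUDec : Bool → Set NDU := fun g => if g then {NDU.A} else {NDU.B}

def NDUUtil : Bool → Set NDU := fun g => if g then {NDU.UA} else {NDU.UB}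

/-- Agent-subgraph edges: a directed path from a decision of agent `g` to a
utility of `g` avoiding other utilities of `g`. -/
def NDUAgentEdge (g : Bool) (D U : NDU) : Prop :=
  D ∈ NDUDec g ∧ U ∈ NDUUtil g ∧
    Relation.TransGen (fun a b => NDUEdge a b ∧ (b = U ∨ b ∉ NDUUtil g)) D U

/-- The terminal edges of the discovered mechanised causal graph: only from the
mechanism of U^B into the mechanism of B. -/
def NDUTerm : NDU → NDU → Prop := fun y d => y = NDU.UB ∧ d = NDU.B

/-- The mechanism edges: from the mechanism of A into the mechanism of B. -/
def NDUMech : NDU → NDU → Prop := fun y d => y = NDU.A ∧ d = NDU.B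

lemma ndu_reach (y : NDU) (h : Relation.ReflTransGen NDUEdge NDU.A y) :
    y = NDU.A ∨ y = NDU.UB := by
  induction h with
  | refl => exact Or.inl rfl
  | tail _ hbc ih =>
    rcases ih with rfl | rfl
    · rename_i c _; cases c <;> simp [NDUEdge] at hbc ⊢
    · rename_i c _; cases c <;> simp [NDUEdge] at hbc ⊢

lemma ndu_no_desc : ¬ Relation.TransGen NDUEdge NDU.A NDU.UA := fun h => by
  rcases ndu_reach NDU.UA h.to_reflTransGen with h | h <;> simp at h

lemma ndu_no_agent_edge : ¬ NDUAgentEdge true NDU.A NDU.UA := by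
  rintro ⟨-, -, h⟩
  exact ndu_no_desc (Relation.TransGen.mono (fun a b hb => hb.1) _ _ h)

lemma ndu_agent_edge_char (g : Bool) (a b : NDU) (h : NDUAgentEdge g a b) :
    g = false ∧ a = NDU.B ∧ b = NDU.UB := by
  obtain ⟨hd, hu, ht⟩ := h
  cases g
  · simp [NDUDec, NDUUtil] at hd hu
    exact ⟨rfl, hd, hu⟩
  · simp [NDUDec, NDUUtil] at hd hu
    subst hd; subst hu
    exact absurd (Relation.TransGen.mono (fun a b hb => hb.1) _ _ ht) ndu_no_desc

lemma ndu_sym_reach (y : NDU)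
    (h : Relation.ReflTransGen
      (fun a b => (∃ g', NDUAgentEdge g' a b) ∨ (∃ g', NDUAgentEdge g' b a))
      NDU.A y) : y = NDU.A := by
  induction h with
  | refl => rfl
  | tail _ hbc ih =>
    subst ih
    rcases hbc with ⟨g, h⟩ | ⟨g, h⟩ <;>
      · have := ndu_agent_edge_char _ _ _ h; simp_all

/-- In the non-descendant-utility example: U^A is not a descendant of A; hence
the agent subgraph of agent 1 has no edge from A to U^A; the decision-utility
subgraph violates the assumption that each weakly connected component is an agent
subgraph containing at least one decision and one utility; and consequently
Agency Identification applied to the discovered mechanised causal graph labels A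
and U^A as chance nodes. -/
theorem non_descendant_utility_example :
    -- U^A is not a descendant of A
    (¬ Relation.TransGen NDUEdge NDU.A NDU.UA) ∧
    -- the agent subgraph for agent 1 has no edge from A to U^A
    (¬ NDUAgentEdge true NDU.A NDU.UA) ∧
    -- the component assumption on the decision-utility subgraph is violated
    (¬ ∀ x, (∃ g, x ∈ NDUDec g ∨ x ∈ NDUUtil g) → ∃ g,
      {y | (∃ g', y ∈ NDUDec g' ∨ y ∈ NDUUtil g') ∧
          Relation.ReflTransGen
            (fun a b => (∃ g', NDUAgentEdge g' a b) ∨ (∃ g', NDUAgentEdge g' b a))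
            x y}
        = {y | y ∈ NDUDec g ∨ y ∈ NDUUtil g}
      ∧ (∃ d, d ∈ NDUDec g) ∧ (∃ u, u ∈ NDUUtil g)) ∧
    -- Agency Identification labels A and U^A as chance nodes: neither has its
    -- mechanism with an incoming terminal edge (decision) or an outgoing
    -- terminal edge (utility)
    ((¬ ∃ y, NDUTerm y NDU.A) ∧ (¬ ∃ d, NDUTerm NDU.A d) ∧
     (¬ ∃ y, NDUTerm y NDU.UA) ∧ (¬ ∃ d, NDUTerm NDU.UA d)) := by
  refine ⟨ndu_no_desc, ndu_no_agent_edge, ?_, ?_⟩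
  · intro h
    obtain ⟨g, hset, -, -⟩ := h NDU.A ⟨true, Or.inl (by simp [NDUDec])⟩
    have hA : NDU.A ∈ {y | y ∈ NDUDec g ∨ y ∈ NDUUtil g} := by
      rw [← hset]
      exact ⟨⟨true, Or.inl (by simp [NDUDec])⟩, Relation.ReflTransGen.refl⟩
    cases g
    · simp [NDUDec, NDUUtil] at hA
    · have hUA : NDU.UA ∈ {y | y ∈ NDUDec true ∨ y ∈ NDUUtil true} := by
        simp [NDUDec, NDUUtil]
      rw [← hset] at hUA
      have := ndu_sym_reach NDU.UA hUA.2
      simp at this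
  · refine ⟨?_, ?_, ?_, ?_⟩ <;> rintro ⟨x, h⟩ <;> simp [NDUTerm] at h
end
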